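/- Let n ≥ 2, let A^{(1)},…,A^{(m)} ∈ ℝ^{n×n×n} be symmetric third-order tensors, and define f(Q) := Σ_{ℓ=1}^m Σ_{j=1}^n (W^{(ℓ)}_{jjj}(Q))², where W^{(ℓ)}_{abc}(Q) = Σ_{p,q,r} A^{(ℓ)}_{pqr} Q_{pa} Q_{qb} Q_{rc}. Let ε > 0, let Q ∈ SO(n), let 1 ≤ i < j ≤ n satisfy |⟨ProjGrad f(Q), Q δ_{i,j}⟩| ≥ ε ‖ProjGrad f(Q)‖, let θ* ∈ [−π/4, π/4] be a global maximizer over ℝ of θ ↦ f(Q G(i,j,θ)), and set Q' := Q G(i,j,θ*). Then |f(Q') − f(Q)| ≥ (√2 ε / 4) · ‖ProjGrad f(Q)‖ · ‖Q' − Q‖. -/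

import Mathlib

open Matrix Real Filter Set

attribute [local instance] Matrix.frobeniusNormedAddCommGroup Matrix.frobeniusNormedSpace

noncomputable def frobInner {n : ℕ} (A B : Matrix (Fin n) (Fin n) ℝ) : ℝ :=
  ∑ i, ∑ j, A i j * B i j

noncomputable def frobNorm {n : ℕ} (A : Matrix (Fin n) (Fin n) ℝ) : ℝ :=
  Real.sqrt (∑ i, ∑ j, (A i j) ^ 2)

def SOn (n : ℕ) : Set (Matrix (Fin n) (Fin n) ℝ) := {Q | Qᵀ * Q = 1 ∧ Q.det = 1}

noncomputable def grad {n : ℕ} (f : Matrix (Fin n) (Fin n) ℝ → ℝ)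
    (Q : Matrix (Fin n) (Fin n) ℝ) : Matrix (Fin n) (Fin n) ℝ :=
  Matrix.of fun k l => fderiv ℝ f Q (Matrix.single k l 1)

noncomputable def Lam {n : ℕ} (f : Matrix (Fin n) (Fin n) ℝ → ℝ)
    (Q : Matrix (Fin n) (Fin n) ℝ) : Matrix (Fin n) (Fin n) ℝ :=
  (1 / 2 : ℝ) • (Qᵀ * grad f Q - (grad f Q)ᵀ * Q)

noncomputable def projGrad {n : ℕ} (f : Matrix (Fin n) (Fin n) ℝ → ℝ)
    (Q : Matrix (Fin n) (Fin n) ℝ) : Matrix (Fin n) (Fin n) ℝ := Q * Lam f Q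

noncomputable def givens {n : ℕ} (i j : Fin n) (θ : ℝ) : Matrix (Fin n) (Fin n) ℝ :=
  Matrix.of fun k l =>
    if k = i ∧ l = i then Real.cos θ
    else if k = j ∧ l = j then Real.cos θ
    else if k = j ∧ l = i then Real.sin θ
    else if k = i ∧ l = j then -Real.sin θ
    else if k = l then 1 else 0

def deltaMat {n : ℕ} (i j : Fin n) : Matrix (Fin n) (Fin n) ℝ :=
  Matrix.of fun k l => if k = j ∧ l = i then 1 else if k = i ∧ l = j then -1 else 0

section aux
variable {n : ℕ} {i j : Fin n}

lemma sum_two_ite (hij : i ≠ j) (x y : ℝ) :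
    ∑ q : Fin n, (if q = i then x else if q = j then y else 0) = x + y := by
  have : ∀ q : Fin n, (if q = i then x else if q = j then y else 0)
      = (if q = i then x else 0) + (if q = j then y else 0) := by
    intro q
    by_cases h1 : q = i <;> by_cases h2 : q = j
    · exact absurd (h1.symm.trans h2) hij
    all_goals simp [h1, h2, hij, Ne.symm hij]
  simp [this, Finset.sum_add_distrib]

-- orthonormal columns
lemma col_orth {Q : Matrix (Fin n) (Fin n) ℝ} (hQ : Qᵀ * Q = 1) (p q : Fin n) :
    ∑ k, Q k p * Q k q = if p = q then 1 else 0 := by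
  have := congrFun (congrFun hQ p) q
  simpa [Matrix.mul_apply, Matrix.transpose_apply, Matrix.one_apply] using this

lemma orth_inner_invariant {Q : Matrix (Fin n) (Fin n) ℝ} (hQ : Qᵀ * Q = 1)
    (M N : Matrix (Fin n) (Fin n) ℝ) :
    ∑ k, ∑ l, (Q * M) k l * (Q * N) k l = ∑ k, ∑ l, M k l * N k l := by
  rw [Finset.sum_comm]
  conv_rhs => rw [Finset.sum_comm]
  refine Finset.sum_congr rfl fun l _ => ?_
  simp only [Matrix.mul_apply]
  calc ∑ k, (∑ p, Q k p * M p l) * (∑ q, Q k q * N q l)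
      = ∑ k, ∑ p, ∑ q, (M p l * N q l) * (Q k p * Q k q) := by
        refine Finset.sum_congr rfl fun k _ => ?_
        rw [Finset.sum_mul_sum]
        exact Finset.sum_congr rfl fun p _ => Finset.sum_congr rfl fun q _ => by ring
    _ = ∑ p, ∑ q, (M p l * N q l) * ∑ k, Q k p * Q k q := by
        rw [Finset.sum_comm]
        refine Finset.sum_congr rfl fun p _ => ?_
        rw [Finset.sum_comm]
        refine Finset.sum_congr rfl fun q _ => ?_
        rw [← Finset.mul_sum]
    _ = ∑ p, M p l * N p l := by
        refine Finset.sum_congr rfl fun p _ => ?_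
        simp [col_orth hQ, mul_ite, mul_one, mul_zero]
end aux

section giv
variable {n : ℕ} {i j : Fin n} (hij : i ≠ j)

lemma givens_zero : givens i j 0 = (1 : Matrix (Fin n) (Fin n) ℝ) := by
  ext k l
  simp only [givens, Matrix.of_apply, Real.cos_zero, Real.sin_zero, Matrix.one_apply, neg_zero]
  by_cases h1 : k = i <;> by_cases h2 : l = i <;> by_cases h3 : k = j <;> by_cases h4 : l = j <;>
    simp_all

include hij in
lemma givens_col_i (t : ℝ) (q : Fin n) :
    givens i j t q i = if q = i then Real.cos t else if q = j then Real.sin t else 0 := by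
  simp only [givens, Matrix.of_apply]
  by_cases h1 : q = i <;> by_cases h2 : q = j <;> simp_all [hij, Ne.symm hij]

include hij in
lemma givens_col_j (t : ℝ) (q : Fin n) :
    givens i j t q j = if q = i then -Real.sin t else if q = j then Real.cos t else 0 := by
  simp only [givens, Matrix.of_apply]
  by_cases h1 : q = i <;> by_cases h2 : q = j <;> simp_all [hij, Ne.symm hij]

lemma givens_col_other (t : ℝ) (q k : Fin n) (hki : k ≠ i) (hkj : k ≠ j) :
    givens i j t q k = if q = k then 1 else 0 := by
  simp only [givens, Matrix.of_apply]
  by_cases h1 : q = i <;> by_cases h2 : q = j <;>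
    simp_all [Ne.symm hki, Ne.symm hkj, hki.symm, hkj.symm]

include hij in
lemma mul_givens_col_i (Q : Matrix (Fin n) (Fin n) ℝ) (t : ℝ) (p : Fin n) :
    (Q * givens i j t) p i = Real.cos t * Q p i + Real.sin t * Q p j := by
  rw [Matrix.mul_apply]
  have : ∀ q, Q p q * givens i j t q i
      = (if q = i then Real.cos t * Q p i else if q = j then Real.sin t * Q p j else 0) := by
    intro q
    rw [givens_col_i hij]
    by_cases h1 : q = i <;> by_cases h2 : q = j <;> simp_all <;> ring
  rw [Finset.sum_congr rfl fun q _ => this q, sum_two_ite hij]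

include hij in
lemma mul_givens_col_j (Q : Matrix (Fin n) (Fin n) ℝ) (t : ℝ) (p : Fin n) :
    (Q * givens i j t) p j = -Real.sin t * Q p i + Real.cos t * Q p j := by
  rw [Matrix.mul_apply]
  have : ∀ q, Q p q * givens i j t q j
      = (if q = i then -Real.sin t * Q p i else if q = j then Real.cos t * Q p j else 0) := by
    intro q
    rw [givens_col_j hij]
    by_cases h1 : q = i <;> by_cases h2 : q = j <;> simp_all <;> ring
  rw [Finset.sum_congr rfl fun q _ => this q, sum_two_ite hij]

lemma mul_givens_col_other (Q : Matrix (Fin n) (Fin n) ℝ) (t : ℝ) (p k : Fin n)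
    (hki : k ≠ i) (hkj : k ≠ j) : (Q * givens i j t) p k = Q p k := by
  rw [Matrix.mul_apply]
  have : ∀ q, Q p q * givens i j t q k = if q = k then Q p k else 0 := by
    intro q
    rw [givens_col_other t q k hki hkj]
    by_cases h1 : q = k <;> simp_all
  simp [Finset.sum_congr rfl fun q _ => this q]
end giv

noncomputable def T3 {n : ℕ} (B : Fin n → Fin n → Fin n → ℝ) (u v w : Fin n → ℝ) : ℝ :=
  ∑ p, ∑ q, ∑ r, B p q r * u p * v q * w r

section t3
variable {n : ℕ} {B : Fin n → Fin n → Fin n → ℝ}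

lemma T3_lin1 (x y : ℝ) (u u' v w : Fin n → ℝ) :
    T3 B (fun p => x * u p + y * u' p) v w = x * T3 B u v w + y * T3 B u' v w := by
  simp only [T3, Finset.mul_sum, ← Finset.sum_add_distrib]
  exact Finset.sum_congr rfl fun p _ => Finset.sum_congr rfl fun q _ =>
    Finset.sum_congr rfl fun r _ => by ring

lemma T3_lin2 (x y : ℝ) (u v v' w : Fin n → ℝ) :
    T3 B u (fun p => x * v p + y * v' p) w = x * T3 B u v w + y * T3 B u v' w := by
  simp only [T3, Finset.mul_sum, ← Finset.sum_add_distrib]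
  exact Finset.sum_congr rfl fun p _ => Finset.sum_congr rfl fun q _ =>
    Finset.sum_congr rfl fun r _ => by ring

lemma T3_lin3 (x y : ℝ) (u v w w' : Fin n → ℝ) :
    T3 B u v (fun p => x * w p + y * w' p) = x * T3 B u v w + y * T3 B u v w' := by
  simp only [T3, Finset.mul_sum, ← Finset.sum_add_distrib]
  exact Finset.sum_congr rfl fun p _ => Finset.sum_congr rfl fun q _ =>
    Finset.sum_congr rfl fun r _ => by ring

lemma T3_swap12 (hs : ∀ p q r, B p q r = B q p r) (u v w : Fin n → ℝ) :
    T3 B u v w = T3 B v u w := by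
  simp only [T3]
  rw [Finset.sum_comm]
  exact Finset.sum_congr rfl fun p _ => Finset.sum_congr rfl fun q _ =>
    Finset.sum_congr rfl fun r _ => by rw [hs q p r]; ring

lemma T3_swap23 (hs : ∀ p q r, B p q r = B p r q) (u v w : Fin n → ℝ) :
    T3 B u v w = T3 B u w v := by
  simp only [T3]
  refine Finset.sum_congr rfl fun p _ => ?_
  rw [Finset.sum_comm]
  exact Finset.sum_congr rfl fun q _ => Finset.sum_congr rfl fun r _ => by rw [hs p r q]; ring

/-- expansion of the symmetric cubic form along a rotation of two columns -/
lemma T3_cubic_expand (hs1 : ∀ p q r, B p q r = B q p r) (hs2 : ∀ p q r, B p q r = B p r q)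
    (c s : ℝ) (u v : Fin n → ℝ) :
    T3 B (fun p => c * u p + s * v p) (fun p => c * u p + s * v p)
      (fun p => c * u p + s * v p) =
      c^3 * T3 B u u u + 3 * c^2 * s * T3 B u u v + 3 * c * s^2 * T3 B u v v
        + s^3 * T3 B v v v := by
  have huvu : T3 B u v u = T3 B u u v := by rw [T3_swap23 hs2]
  have hvuu : T3 B v u u = T3 B u u v := by
    rw [T3_swap12 hs1, T3_swap23 hs2]
  have hvuv : T3 B v u v = T3 B u v v := by rw [T3_swap12 hs1]
  have hvvu : T3 B v v u = T3 B u v v := by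
    rw [T3_swap23 hs2, T3_swap12 hs1]
  rw [T3_lin1, T3_lin2, T3_lin2, T3_lin3, T3_lin3, T3_lin3, T3_lin3,
    huvu, hvuu, hvuv, hvvu]
  ring
end t3

lemma perEll (a b d e c s : ℝ) (h : c^2 + s^2 = 1) :
    (a*c^3 + 3*b*c^2*s + 3*d*c*s^2 + e*s^3)^2
      + (e*c^3 - 3*d*c^2*s + 3*b*c*s^2 - a*s^3)^2
    = ((3*a+3*d)^2 + (3*b+3*e)^2 + (a-3*d)^2 + (3*b-e)^2)/16
      + (((3*a+3*d)*(a-3*d) - (3*b+3*e)*(3*b-e))/8) * (c^4 - 6*c^2*s^2 + s^4)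
      + (((3*a+3*d)*(3*b-e) + (3*b+3*e)*(a-3*d))/8) * (4*c*s*(c^2-s^2)) := by
  have H : (a*c^3 + 3*b*c^2*s + 3*d*c*s^2 + e*s^3)^2
      + (e*c^3 - 3*d*c^2*s + 3*b*c*s^2 - a*s^3)^2
    = (((3*a+3*d)^2 + (3*b+3*e)^2 + (a-3*d)^2 + (3*b-e)^2)/16) * (c^2+s^2)^3
      + (((3*a+3*d)*(a-3*d) - (3*b+3*e)*(3*b-e))/8) * ((c^4 - 6*c^2*s^2 + s^4) * (c^2+s^2))
      + (((3*a+3*d)*(3*b-e) + (3*b+3*e)*(a-3*d))/8) * (4*c*s*(c^2-s^2) * (c^2+s^2)) := by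
    ring
  rw [H, h]
  ring

lemma cos_four (t : ℝ) :
    Real.cos (4*t) = (Real.cos t)^4 - 6*(Real.cos t)^2*(Real.sin t)^2 + (Real.sin t)^4 := by
  have h : (Real.sin t)^2 + (Real.cos t)^2 = 1 := Real.sin_sq_add_cos_sq t
  have h1 : Real.cos (4*t) = 2 * (2 * (Real.cos t)^2 - 1)^2 - 1 := by
    rw [show (4:ℝ)*t = 2*(2*t) by ring, Real.cos_two_mul, Real.cos_two_mul]
  rw [h1]
  nlinarith [h]

lemma sin_four (t : ℝ) :
    Real.sin (4*t) = 4*(Real.cos t)*(Real.sin t)*((Real.cos t)^2 - (Real.sin t)^2) := by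
  have h : (Real.sin t)^2 + (Real.cos t)^2 = 1 := Real.sin_sq_add_cos_sq t
  have h1 : Real.sin (4*t) = 2 * (2 * Real.sin t * Real.cos t) * (2 * (Real.cos t)^2 - 1) := by
    rw [show (4:ℝ)*t = 2*(2*t) by ring, Real.sin_two_mul, Real.sin_two_mul, Real.cos_two_mul]
  rw [h1]
  linear_combination 4*Real.sin t*Real.cos t*h

lemma x_cos_le_sin {x : ℝ} (h0 : 0 ≤ x) (h2 : x ≤ π/2) : x * Real.cos x ≤ Real.sin x := by
  rcases eq_or_lt_of_le h0 with h0' | h0'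
  · simp [← h0']
  rcases eq_or_lt_of_le h2 with h2' | h2'
  · rw [h2', Real.cos_pi_div_two]
    simpa [h2'] using Real.sin_nonneg_of_nonneg_of_le_pi (by positivity) (by linarith [Real.pi_pos])
  have hc : 0 < Real.cos x := Real.cos_pos_of_mem_Ioo ⟨by linarith [Real.pi_pos], h2'⟩
  have := Real.lt_tan h0' h2'
  rw [Real.tan_eq_sin_div_cos] at this
  calc x * Real.cos x ≤ (Real.sin x / Real.cos x) * Real.cos x := by
        exact mul_le_mul_of_nonneg_right this.le hc.le
    _ = Real.sin x := by field_simp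

lemma trig_core {t : ℝ} (h0 : 0 ≤ t) (h1 : t ≤ π/4) :
    4 * |Real.sin (4*t)| * |Real.sin (t/2)| ≤ 1 - Real.cos (4*t) := by
  have hpi : (0:ℝ) < π := Real.pi_pos
  have hs2 : 0 ≤ Real.sin (2*t) := Real.sin_nonneg_of_nonneg_of_le_pi (by linarith) (by linarith)
  have hc2 : 0 ≤ Real.cos (2*t) := Real.cos_nonneg_of_mem_Icc ⟨by linarith, by linarith⟩
  have hsh : 0 ≤ Real.sin (t/2) := Real.sin_nonneg_of_nonneg_of_le_pi (by linarith) (by linarith)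
  have h4 : Real.sin (4*t) = 2 * Real.sin (2*t) * Real.cos (2*t) := by
    rw [show (4:ℝ)*t = 2*(2*t) by ring, Real.sin_two_mul]
  have hcos4 : 1 - Real.cos (4*t) = 2 * (Real.sin (2*t))^2 := by
    rw [show (4:ℝ)*t = 2*(2*t) by ring, Real.cos_two_mul]
    nlinarith [Real.sin_sq_add_cos_sq (2*t)]
  rw [h4, hcos4, abs_of_nonneg hsh, abs_of_nonneg (by positivity : (0:ℝ) ≤ 2 * Real.sin (2*t) * Real.cos (2*t))]
  -- suffices: 4 cos(2t) sin(t/2) ≤ sin(2t), then multiply by 2 sin(2t) ≥ 0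
  have key : 4 * Real.cos (2*t) * Real.sin (t/2) ≤ Real.sin (2*t) := by
    have hsle : Real.sin (t/2) ≤ t/2 := Real.sin_le (by linarith)
    have h2t : 2*t * Real.cos (2*t) ≤ Real.sin (2*t) := x_cos_le_sin (by linarith) (by linarith)
    nlinarith [hc2]
  nlinarith [hs2, key, mul_le_mul_of_nonneg_left key (by linarith : (0:ℝ) ≤ 2 * Real.sin (2*t))]

lemma trig_final {t : ℝ} (h0 : -(π/4) ≤ t) (h1 : t ≤ π/4) :
    4 * |Real.sin (4*t)| * |Real.sin (t/2)| ≤ 1 - Real.cos (4*t) := by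
  rcases le_or_gt 0 t with h | h
  · exact trig_core h h1
  · have := trig_core (t := -t) (by linarith) (by linarith)
    have e1 : Real.sin (4*(-t)) = -Real.sin (4*t) := by rw [show (4:ℝ)*(-t) = -(4*t) by ring, Real.sin_neg]
    have e2 : Real.sin ((-t)/2) = -Real.sin (t/2) := by rw [show (-t)/2 = -(t/2) by ring, Real.sin_neg]
    have e3 : Real.cos (4*(-t)) = Real.cos (4*t) := by rw [show (4:ℝ)*(-t) = -(4*t) by ring, Real.cos_neg]
    rw [e1, e2, e3, abs_neg, abs_neg] at this
    exact this









section frob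
variable {n : ℕ} {i j : Fin n}

lemma frobInner_delta (hij : i ≠ j) (X : Matrix (Fin n) (Fin n) ℝ) :
    frobInner X (deltaMat i j) = X j i - X i j := by
  unfold frobInner deltaMat
  have hpt : ∀ k l : Fin n, X k l * (Matrix.of fun k l =>
      if k = j ∧ l = i then (1:ℝ) else if k = i ∧ l = j then -1 else 0) k l
      = (if k = j then (if l = i then X k l else 0) else 0)
        + (if k = i then (if l = j then -X k l else 0) else 0) := by
    intro k l
    by_cases h1 : k = j <;> by_cases h2 : l = i <;> by_cases h3 : k = i <;>
      by_cases h4 : l = j <;> simp_all [hij, Ne.symm hij] <;> ring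
  simp only [hpt, Finset.sum_add_distrib]
  have e1 : ∀ x : Fin n, (∑ x1, if x = j then (if x1 = i then X x x1 else 0) else 0)
      = (if x = j then X j i else 0) := by
    intro x; by_cases h : x = j <;> simp [h]
  have e2 : ∀ x : Fin n, (∑ x1, if x = i then (if x1 = j then -X x x1 else 0) else 0)
      = (if x = i then -X i j else 0) := by
    intro x; by_cases h : x = i <;> simp [h]
  rw [Finset.sum_congr rfl fun x _ => e1 x, Finset.sum_congr rfl fun x _ => e2 x]
  simp only [Finset.sum_ite_eq', Finset.mem_univ, if_true]
  ring

lemma mul_delta_apply (hij : i ≠ j) (Q : Matrix (Fin n) (Fin n) ℝ) (k l : Fin n) :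
    (Q * deltaMat i j) k l = (if l = i then Q k j else 0) + (if l = j then -Q k i else 0) := by
  rw [Matrix.mul_apply]
  have hpt : ∀ q, Q k q * deltaMat i j q l
      = (if q = j then (if l = i then Q k j else 0) else 0)
        + (if q = i then (if l = j then -Q k i else 0) else 0) := by
    intro q
    unfold deltaMat
    by_cases h1 : q = j <;> by_cases h2 : l = i <;> by_cases h3 : q = i <;>
      by_cases h4 : l = j <;> simp_all [hij, Ne.symm hij] <;> ring
  simp only [hpt, Finset.sum_add_distrib, Finset.sum_ite_eq', Finset.mem_univ, if_true]

lemma frobInner_grad_delta (hij : i ≠ j) {f : Matrix (Fin n) (Fin n) ℝ → ℝ}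
    {Q : Matrix (Fin n) (Fin n) ℝ} (hQ : Qᵀ * Q = 1) :
    frobInner (projGrad f Q) (Q * deltaMat i j)
      = frobInner (grad f Q) (Q * deltaMat i j) := by
  unfold projGrad
  rw [show frobInner (Q * Lam f Q) (Q * deltaMat i j)
      = ∑ k, ∑ l, (Q * Lam f Q) k l * (Q * deltaMat i j) k l from rfl,
    orth_inner_invariant hQ]
  rw [show (∑ k, ∑ l, Lam f Q k l * deltaMat i j k l) = frobInner (Lam f Q) (deltaMat i j) from rfl,
    frobInner_delta hij]
  -- RHS
  unfold frobInner
  have : ∀ k : Fin n, ∑ l, grad f Q k l * (Q * deltaMat i j) k l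
      = grad f Q k i * Q k j - grad f Q k j * Q k i := by
    intro k
    have hpt : ∀ l, grad f Q k l * (Q * deltaMat i j) k l
        = (if l = i then grad f Q k i * Q k j else 0)
          + (if l = j then -(grad f Q k j * Q k i) else 0) := by
      intro l
      rw [mul_delta_apply hij]
      by_cases h1 : l = i <;> by_cases h2 : l = j <;> simp_all [hij, Ne.symm hij] <;> ring
    simp only [hpt, Finset.sum_add_distrib, Finset.sum_ite_eq', Finset.mem_univ, if_true]
    ring
  rw [Finset.sum_congr rfl fun k _ => this k]
  unfold Lam
  simp only [Matrix.smul_apply, Matrix.sub_apply, Matrix.mul_apply, Matrix.transpose_apply,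
    smul_eq_mul]
  have c1 : ∑ k, Q k j * grad f Q k i = ∑ k, grad f Q k i * Q k j :=
    Finset.sum_congr rfl fun k _ => mul_comm _ _
  have c2 : ∑ k, Q k i * grad f Q k j = ∑ k, grad f Q k j * Q k i :=
    Finset.sum_congr rfl fun k _ => mul_comm _ _
  rw [Finset.sum_sub_distrib]
  linarith [c1, c2]
end frob

section deriv
variable {n : ℕ}

lemma frobInner_grad_eq_fderiv (f : Matrix (Fin n) (Fin n) ℝ → ℝ)
    (Q M : Matrix (Fin n) (Fin n) ℝ) :
    frobInner (grad f Q) M = fderiv ℝ f Q M := by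
  unfold frobInner grad
  conv_rhs => rw [Matrix.matrix_eq_sum_single M]
  rw [map_sum]
  refine Finset.sum_congr rfl fun k _ => ?_
  rw [map_sum]
  refine Finset.sum_congr rfl fun l _ => ?_
  rw [Matrix.of_apply, mul_comm]
  congr 1
  rw [show Matrix.single k l (M k l) = (M k l) • Matrix.single k l (1:ℝ) by
    rw [Matrix.smul_single]; norm_num]
  rw [(fderiv ℝ f Q).map_smul]
  simp

-- coordinate projections are differentiable
noncomputable def entryCLM (k l : Fin n) : Matrix (Fin n) (Fin n) ℝ →L[ℝ] ℝ :=
  LinearMap.toContinuousLinearMap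
    { toFun := fun M => M k l
      map_add' := fun M N => rfl
      map_smul' := fun c M => rfl }

lemma differentiable_entry (k l : Fin n) :
    Differentiable ℝ (fun M : Matrix (Fin n) (Fin n) ℝ => M k l) :=
  (entryCLM k l).differentiable

lemma differentiable_f {m : ℕ} (A : Fin m → (Fin n → Fin n → Fin n → ℝ)) :
    Differentiable ℝ (fun Q : Matrix (Fin n) (Fin n) ℝ => ∑ ℓ : Fin m, ∑ j,
      (∑ p, ∑ q, ∑ r, A ℓ p q r * Q p j * Q q j * Q r j) ^ 2) := by
  apply Differentiable.fun_sum
  intro ℓ _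
  apply Differentiable.fun_sum
  intro j _
  apply Differentiable.pow
  apply Differentiable.fun_sum; intro p _
  apply Differentiable.fun_sum; intro q _
  apply Differentiable.fun_sum; intro r _
  exact (((differentiable_const _).mul (differentiable_entry p j)).mul
    (differentiable_entry q j)).mul (differentiable_entry r j)

lemma hasDerivAt_mul_givens (Q : Matrix (Fin n) (Fin n) ℝ) {i j : Fin n} (hij : i ≠ j) :
    HasDerivAt (fun t : ℝ => Q * givens i j t) (Q * deltaMat i j) 0 := by
  classical
  set Pm : Matrix (Fin n) (Fin n) ℝ :=
    Matrix.single i i 1 + Matrix.single j j 1 with hPm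
  have hgiv : ∀ t, givens i j t
      = Real.cos t • Pm + Real.sin t • deltaMat i j + ((1 : Matrix (Fin n) (Fin n) ℝ) - Pm) := by
    intro t
    ext k l
    simp only [givens, Matrix.of_apply, Matrix.add_apply, Matrix.sub_apply, Matrix.smul_apply,
      hPm, deltaMat, Matrix.one_apply, Matrix.single_apply, smul_eq_mul]
    by_cases h1 : k = i <;> by_cases h2 : l = i <;> by_cases h3 : k = j <;>
      by_cases h4 : l = j <;> simp_all [hij, Ne.symm hij, eq_comm] <;> ring
  have heq : (fun t : ℝ => Q * givens i j t)
      = fun t : ℝ => Real.cos t • (Q * Pm) + Real.sin t • (Q * deltaMat i j)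
          + Q * ((1 : Matrix (Fin n) (Fin n) ℝ) - Pm) := by
    funext t
    rw [hgiv t, Matrix.mul_add, Matrix.mul_add, Matrix.mul_smul, Matrix.mul_smul]
  rw [heq]
  have h1 : HasDerivAt (fun t : ℝ => Real.cos t • (Q * Pm))
      ((-Real.sin 0) • (Q * Pm)) 0 := (Real.hasDerivAt_cos 0).smul_const _
  have h2 : HasDerivAt (fun t : ℝ => Real.sin t • (Q * deltaMat i j))
      ((Real.cos 0) • (Q * deltaMat i j)) 0 := (Real.hasDerivAt_sin 0).smul_const _
  have h3 := (h1.add h2).add_const (Q * ((1 : Matrix (Fin n) (Fin n) ℝ) - Pm))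
  simp only [Real.sin_zero, neg_zero, zero_smul, Real.cos_zero, one_smul, zero_add] at h3
  exact h3
end deriv






set_option maxHeartbeats 1000000 in
set_option maxRecDepth 8000 in
theorem stmt_11 {n m : ℕ} (hn : 2 ≤ n) (A : Fin m → (Fin n → Fin n → Fin n → ℝ))
    (hsym1 : ∀ ℓ p q r, A ℓ p q r = A ℓ q p r)
    (hsym2 : ∀ ℓ p q r, A ℓ p q r = A ℓ p r q)
    (f : Matrix (Fin n) (Fin n) ℝ → ℝ)
    (hf : ∀ Q, f Q = ∑ ℓ : Fin m, ∑ j,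
      (∑ p, ∑ q, ∑ r, A ℓ p q r * Q p j * Q q j * Q r j) ^ 2)
    (ε : ℝ) (hε : 0 < ε)
    (Q : Matrix (Fin n) (Fin n) ℝ) (hQ : Q ∈ SOn n) (i j : Fin n) (hij : i < j)
    (hgrad : ε * frobNorm (projGrad f Q) ≤ |frobInner (projGrad f Q) (Q * deltaMat i j)|)
    (θ : ℝ) (hθ : θ ∈ Set.Icc (-(π / 4)) (π / 4))
    (hmax : ∀ θ' : ℝ, f (Q * givens i j θ') ≤ f (Q * givens i j θ))
    (Q' : Matrix (Fin n) (Fin n) ℝ) (hQ' : Q' = Q * givens i j θ) :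
    Real.sqrt 2 * ε / 4 * frobNorm (projGrad f Q) * frobNorm (Q' - Q) ≤ |f Q' - f Q| := by
  classical
  have hijne : i ≠ j := Fin.ne_of_lt hij
  have hQ1 : Qᵀ * Q = 1 := hQ.1
  set ui : Fin n → ℝ := fun p => Q p i with hui
  set uj : Fin n → ℝ := fun p => Q p j with huj
  set a : Fin m → ℝ := fun ℓ => T3 (A ℓ) ui ui ui with ha
  set b : Fin m → ℝ := fun ℓ => T3 (A ℓ) ui ui uj with hb
  set d : Fin m → ℝ := fun ℓ => T3 (A ℓ) ui uj uj with hd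
  set e : Fin m → ℝ := fun ℓ => T3 (A ℓ) uj uj uj with he
  set al : ℝ := ∑ ℓ, (((3*a ℓ+3*d ℓ)*(a ℓ-3*d ℓ) - (3*b ℓ+3*e ℓ)*(3*b ℓ-e ℓ))/8) with hal
  set be : ℝ := ∑ ℓ, (((3*a ℓ+3*d ℓ)*(3*b ℓ-e ℓ) + (3*b ℓ+3*e ℓ)*(a ℓ-3*d ℓ))/8) with hbe
  set Kc : ℝ := (∑ ℓ, ∑ k ∈ Finset.univ \ {i, j},
      (T3 (A ℓ) (fun p => Q p k) (fun p => Q p k) (fun p => Q p k))^2)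
    + ∑ ℓ, (((3*a ℓ+3*d ℓ)^2 + (3*b ℓ+3*e ℓ)^2 + (a ℓ-3*d ℓ)^2 + (3*b ℓ-e ℓ)^2)/16) with hKc
  -- the closed form of f along the Givens path
  have key : ∀ t : ℝ, f (Q * givens i j t)
      = Kc + (al * Real.cos (4*t) + be * Real.sin (4*t)) := by
    intro t
    rw [hf]
    have hsd : ∀ F : Fin n → ℝ,
        (∑ k, F k) = (∑ k ∈ Finset.univ \ {i, j}, F k) + (F i + F j) := by
      intro F
      rw [Finset.sum_sdiff_eq_sub (Finset.subset_univ _), Finset.sum_pair hijne]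
      ring
    have hterm : ∀ ℓ : Fin m,
        (∑ k, (∑ p, ∑ q, ∑ r, A ℓ p q r * (Q * givens i j t) p k * (Q * givens i j t) q k
            * (Q * givens i j t) r k) ^ 2)
        = (∑ k ∈ Finset.univ \ {i, j},
            (T3 (A ℓ) (fun p => Q p k) (fun p => Q p k) (fun p => Q p k))^2)
          + (((3*a ℓ+3*d ℓ)^2 + (3*b ℓ+3*e ℓ)^2 + (a ℓ-3*d ℓ)^2 + (3*b ℓ-e ℓ)^2)/16
            + (((3*a ℓ+3*d ℓ)*(a ℓ-3*d ℓ) - (3*b ℓ+3*e ℓ)*(3*b ℓ-e ℓ))/8) * Real.cos (4*t)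
            + (((3*a ℓ+3*d ℓ)*(3*b ℓ-e ℓ) + (3*b ℓ+3*e ℓ)*(a ℓ-3*d ℓ))/8) * Real.sin (4*t)) := by
      intro ℓ
      have hTshape : ∀ k : Fin n, (∑ p, ∑ q, ∑ r, A ℓ p q r * (Q * givens i j t) p k
          * (Q * givens i j t) q k * (Q * givens i j t) r k)
          = T3 (A ℓ) (fun p => (Q * givens i j t) p k) (fun p => (Q * givens i j t) p k)
              (fun p => (Q * givens i j t) p k) := fun k => rfl
      rw [Finset.sum_congr rfl fun k _ => by rw [hTshape k]]
      rw [hsd]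
      congr 1
      · refine Finset.sum_congr rfl fun k hk => ?_
        simp only [Finset.mem_sdiff, Finset.mem_insert, Finset.mem_singleton] at hk
        push_neg at hk
        have hcol : (fun p => (Q * givens i j t) p k) = fun p => Q p k :=
          funext fun p => mul_givens_col_other Q t p k hk.2.1 hk.2.2
        rw [hcol]
      · -- the two rotated columns
        have hcoli : (fun p => (Q * givens i j t) p i)
            = fun p => Real.cos t * ui p + Real.sin t * uj p :=
          funext fun p => mul_givens_col_i hijne Q t p
        have hcolj : (fun p => (Q * givens i j t) p j)
            = fun p => (-Real.sin t) * ui p + Real.cos t * uj p :=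
          funext fun p => mul_givens_col_j hijne Q t p
        rw [hcoli, hcolj, T3_cubic_expand (hsym1 ℓ) (hsym2 ℓ),
          T3_cubic_expand (hsym1 ℓ) (hsym2 ℓ)]

        have hcs : (Real.cos t)^2 + (Real.sin t)^2 = 1 := by
          simpa using Real.cos_sq_add_sin_sq t
        have hP := perEll (a ℓ) (b ℓ) (d ℓ) (e ℓ) (Real.cos t) (Real.sin t) hcs
        rw [cos_four, sin_four]
        calc ((Real.cos t)^3 * a ℓ + 3 * (Real.cos t)^2 * Real.sin t * b ℓ
              + 3 * Real.cos t * (Real.sin t)^2 * d ℓ + (Real.sin t)^3 * e ℓ)^2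
            + ((-Real.sin t)^3 * a ℓ + 3 * (-Real.sin t)^2 * Real.cos t * b ℓ
              + 3 * (-Real.sin t) * (Real.cos t)^2 * d ℓ + (Real.cos t)^3 * e ℓ)^2
            = (a ℓ*(Real.cos t)^3 + 3*(b ℓ)*(Real.cos t)^2*Real.sin t
                + 3*(d ℓ)*Real.cos t*(Real.sin t)^2 + (e ℓ)*(Real.sin t)^3)^2
              + ((e ℓ)*(Real.cos t)^3 - 3*(d ℓ)*(Real.cos t)^2*Real.sin t
                + 3*(b ℓ)*Real.cos t*(Real.sin t)^2 - (a ℓ)*(Real.sin t)^3)^2 := by ring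
          _ = _ := by rw [hP]
    rw [Finset.sum_congr rfl fun ℓ _ => hterm ℓ, Finset.sum_add_distrib, hKc]
    rw [Finset.sum_add_distrib, Finset.sum_add_distrib, ← Finset.sum_mul, ← Finset.sum_mul]
    rw [← hal, ← hbe]
    ring
  clear hal hbe hKc ha hb hd he hui huj
  clear_value al be Kc a b d e ui uj
  clear a b d e ui uj
  -- maximality: the harmonic reaches its amplitude at θ
  set ρ : ℝ := Real.sqrt (al^2 + be^2) with hρ
  have hρ0 : 0 ≤ ρ := Real.sqrt_nonneg _
  have hρ2 : ρ^2 = al^2 + be^2 := Real.sq_sqrt (by positivity)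
  have hcs4 : (Real.cos (4*θ))^2 + (Real.sin (4*θ))^2 = 1 := by
    simpa using Real.cos_sq_add_sin_sq (4*θ)
  have hmaxval : al * Real.cos (4*θ) + be * Real.sin (4*θ) = ρ := by
    have hub : al * Real.cos (4*θ) + be * Real.sin (4*θ) ≤ ρ := by
      nlinarith [sq_nonneg (be * Real.cos (4*θ) - al * Real.sin (4*θ)),
        sq_nonneg (al * Real.cos (4*θ) + be * Real.sin (4*θ) + ρ), hρ2, hρ0, hcs4]
    have hlb : ρ ≤ al * Real.cos (4*θ) + be * Real.sin (4*θ) := by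
      rcases eq_or_lt_of_le (show (0:ℝ) ≤ al^2 + be^2 by positivity) with hz | hz
      · have hal0 : al = 0 := by nlinarith
        have hbe0 : be = 0 := by nlinarith
        simp [hρ, hal0, hbe0]
      · have hρpos : 0 < ρ := Real.sqrt_pos.2 hz
        set x0 : ℝ := if 0 ≤ be then Real.arccos (al/ρ) else -Real.arccos (al/ρ) with hx0
        have hmem : -1 ≤ al/ρ ∧ al/ρ ≤ 1 := by
          constructor
          · rw [le_div_iff₀ hρpos]; nlinarith
          · rw [div_le_one hρpos]; nlinarith
        have hcx : Real.cos x0 = al/ρ := by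
          rcases le_or_gt 0 be with hbe' | hbe'
          · rw [hx0, if_pos hbe']; exact Real.cos_arccos hmem.1 hmem.2
          · rw [hx0, if_neg (not_le.2 hbe'), Real.cos_neg]
            exact Real.cos_arccos hmem.1 hmem.2
        have hsabs : Real.sin (Real.arccos (al/ρ)) = |be|/ρ := by
          rw [Real.sin_arccos]
          rw [show 1 - (al/ρ)^2 = (|be|/ρ)^2 by
            rw [div_pow, div_pow, sq_abs]
            field_simp
            nlinarith [hρ2]]
          exact Real.sqrt_sq (by positivity)
        have hsx : Real.sin x0 = be/ρ := by
          rcases le_or_gt 0 be with hbe' | hbe'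
          · simp only [hx0, hbe', if_true]
            rw [hsabs, abs_of_nonneg hbe']
          · simp only [hx0, not_le.2 hbe', if_false, Real.sin_neg]
            rw [hsabs, abs_of_neg hbe']; ring
        have := hmax (x0/4)
        rw [key (x0/4), key θ, show (4:ℝ)*(x0/4) = x0 by ring, hcx, hsx] at this
        have hval : al * (al/ρ) + be * (be/ρ) = ρ := by
          field_simp
          nlinarith
        linarith [this, hval]
    linarith
  have hy0 : be * Real.cos (4*θ) - al * Real.sin (4*θ) = 0 := by
    have hsq : (be * Real.cos (4*θ) - al * Real.sin (4*θ))^2 = 0 := by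
      have hid : (be * Real.cos (4*θ) - al * Real.sin (4*θ))^2
          = (al^2 + be^2) * ((Real.cos (4*θ))^2 + (Real.sin (4*θ))^2)
            - (al * Real.cos (4*θ) + be * Real.sin (4*θ))^2 := by ring
      rw [hid, hcs4, hmaxval]
      nlinarith [hρ2]
    exact pow_eq_zero_iff (n := 2) (by norm_num) |>.1 hsq
  have hal_eq : al = ρ * Real.cos (4*θ) := by
    linear_combination Real.cos (4*θ) * hmaxval - Real.sin (4*θ) * hy0 - al * hcs4
  have hbe_eq : be = ρ * Real.sin (4*θ) := by
    linear_combination Real.sin (4*θ) * hmaxval + Real.cos (4*θ) * hy0 - be * hcs4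
  -- the derivative at 0 both ways
  have hfd : Differentiable ℝ f := by
    have hfe : f = fun Q : Matrix (Fin n) (Fin n) ℝ => ∑ ℓ : Fin m, ∑ j,
        (∑ p, ∑ q, ∑ r, A ℓ p q r * Q p j * Q q j * Q r j) ^ 2 := funext hf
    rw [hfe]; exact differentiable_f A
  have hγ : HasDerivAt (fun t : ℝ => Q * givens i j t) (Q * deltaMat i j) 0 :=
    hasDerivAt_mul_givens Q hijne
  have hder1 : HasDerivAt (fun t : ℝ => f (Q * givens i j t))
      (fderiv ℝ f Q (Q * deltaMat i j)) 0 := by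
    have hF : HasFDerivAt f (fderiv ℝ f Q) ((fun t : ℝ => Q * givens i j t) 0) := by
      simpa [givens_zero, Matrix.mul_one] using (hfd Q).hasFDerivAt
    exact hF.comp_hasDerivAt 0 hγ
  have hder2 : HasDerivAt (fun t : ℝ => f (Q * givens i j t)) (4*be) 0 := by
    have heq : (fun t : ℝ => f (Q * givens i j t))
        = fun t : ℝ => Kc + (al * Real.cos (4*t) + be * Real.sin (4*t)) := funext key
    rw [heq]
    have h4 : HasDerivAt (fun t : ℝ => 4*t) 4 0 := by
      simpa using (hasDerivAt_id (0:ℝ)).const_mul (4:ℝ)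
    have hcos : HasDerivAt (fun t : ℝ => Real.cos (4*t)) (-Real.sin (4*0) * 4) 0 :=
      (Real.hasDerivAt_cos (4*0)).comp 0 h4
    have hsin : HasDerivAt (fun t : ℝ => Real.sin (4*t)) (Real.cos (4*0) * 4) 0 :=
      (Real.hasDerivAt_sin (4*0)).comp 0 h4
    have hh := ((hcos.const_mul al).add (hsin.const_mul be)).const_add Kc
    have hv : al * (-Real.sin (4*0) * 4) + be * (Real.cos (4*0) * 4) = 4 * be := by
      simp only [mul_zero, Real.sin_zero, Real.cos_zero, neg_zero]
      ring
    rw [hv] at hh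
    exact hh
  have hbe4 : fderiv ℝ f Q (Q * deltaMat i j) = 4*be := hder1.unique hder2
  have hPG : frobInner (projGrad f Q) (Q * deltaMat i j) = 4 * be := by
    rw [frobInner_grad_delta hijne hQ1, frobInner_grad_eq_fderiv, hbe4]
  -- the norm of the step
  have hnorm : frobNorm (Q' - Q) = Real.sqrt (4 - 4 * Real.cos θ) := by
    have hQdiff : Q' - Q = Q * (givens i j θ - 1) := by
      rw [hQ', Matrix.mul_sub, Matrix.mul_one]
    unfold frobNorm
    rw [hQdiff]
    congr 1
    have hsq : ∀ (X : Matrix (Fin n) (Fin n) ℝ) (k l : Fin n), (X k l)^2 = X k l * X k l :=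
      fun X k l => sq (X k l)
    calc ∑ k, ∑ l, ((Q * (givens i j θ - 1)) k l)^2
        = ∑ k, ∑ l, (Q * (givens i j θ - 1)) k l * (Q * (givens i j θ - 1)) k l := by
          exact Finset.sum_congr rfl fun k _ => Finset.sum_congr rfl fun l _ => hsq _ k l
      _ = ∑ k, ∑ l, (givens i j θ - 1) k l * (givens i j θ - 1) k l :=
          orth_inner_invariant hQ1 _ _
      _ = ∑ l, ∑ k, ((givens i j θ - 1) k l)^2 := by
          rw [Finset.sum_comm]
          exact Finset.sum_congr rfl fun l _ => Finset.sum_congr rfl fun k _ => (hsq _ k l).symm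
      _ = 4 - 4 * Real.cos θ := by
          have hsd : ∀ F : Fin n → ℝ,
              (∑ k, F k) = (∑ k ∈ Finset.univ \ {i, j}, F k) + (F i + F j) := by
            intro F
            rw [Finset.sum_sdiff_eq_sub (Finset.subset_univ _), Finset.sum_pair hijne]
            ring
          rw [hsd]
          have hother : ∀ l ∈ Finset.univ \ ({i, j} : Finset (Fin n)),
              (∑ k, ((givens i j θ - 1) k l)^2) = 0 := by
            intro l hl
            simp only [Finset.mem_sdiff, Finset.mem_insert, Finset.mem_singleton] at hl
            push_neg at hl
            refine Finset.sum_eq_zero fun k _ => ?_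
            rw [Matrix.sub_apply, givens_col_other θ k l hl.2.1 hl.2.2, Matrix.one_apply]
            by_cases h : k = l <;> simp [h]
          rw [Finset.sum_eq_zero hother]
          have hcoli : (∑ k, ((givens i j θ - 1) k i)^2)
              = (Real.cos θ - 1)^2 + (Real.sin θ)^2 := by
            have hpt : ∀ k, ((givens i j θ - 1) k i)^2
                = (if k = i then (Real.cos θ - 1)^2 else
                    if k = j then (Real.sin θ)^2 else 0) := by
              intro k
              rw [Matrix.sub_apply, givens_col_i hijne, Matrix.one_apply]
              by_cases h1 : k = i
              · subst h1; simp [hijne]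
              · by_cases h2 : k = j
                · subst h2; simp [h1, Ne.symm hijne]
                · simp [h1, h2]
            rw [Finset.sum_congr rfl fun k _ => hpt k, sum_two_ite hijne]
          have hcolj : (∑ k, ((givens i j θ - 1) k j)^2)
              = (Real.sin θ)^2 + (Real.cos θ - 1)^2 := by
            have hpt : ∀ k, ((givens i j θ - 1) k j)^2
                = (if k = i then (Real.sin θ)^2 else
                    if k = j then (Real.cos θ - 1)^2 else 0) := by
              intro k
              rw [Matrix.sub_apply, givens_col_j hijne, Matrix.one_apply]
              by_cases h1 : k = i
              · subst h1; simp [hijne, Ne.symm hijne]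
              · by_cases h2 : k = j
                · subst h2; simp [h1, Ne.symm hijne]
                · simp [h1, h2]
            rw [Finset.sum_congr rfl fun k _ => hpt k, sum_two_ite hijne]
          rw [hcoli, hcolj]
          nlinarith [Real.cos_sq_add_sin_sq θ]
  -- assemble
  set N := frobNorm (projGrad f Q) with hN
  have hN0 : 0 ≤ N := Real.sqrt_nonneg _
  have hεN : ε * N ≤ 4 * |be| := by
    calc ε * N ≤ |frobInner (projGrad f Q) (Q * deltaMat i j)| := hgrad
      _ = |4 * be| := by rw [hPG]
      _ = 4 * |be| := by rw [abs_mul]; norm_num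
  have hfθ : f Q' - f Q = ρ - al := by
    have h0 : f Q = f (Q * givens i j 0) := by rw [givens_zero, Matrix.mul_one]
    rw [hQ', h0, key θ, key 0]
    simp only [mul_zero, Real.cos_zero, Real.sin_zero]
    rw [hmaxval]
    ring
  have hcosle : Real.cos (4*θ) ≤ 1 := Real.cos_le_one _
  have hfge : 0 ≤ f Q' - f Q := by
    rw [hfθ, hal_eq]; nlinarith
  rw [abs_of_nonneg hfge, hfθ, hnorm]
  have h8 : 4 - 4 * Real.cos θ = 8 * (Real.sin (θ/2))^2 := by
    have hc2 := Real.cos_two_mul (θ/2)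
    rw [show 2*(θ/2) = θ by ring] at hc2
    nlinarith [Real.cos_sq_add_sin_sq (θ/2)]
  rw [h8, show (8:ℝ) * (Real.sin (θ/2))^2 = 8 * (Real.sin (θ/2))^2 from rfl]
  have hsqrt8 : Real.sqrt (8 * (Real.sin (θ/2))^2) = Real.sqrt 8 * |Real.sin (θ/2)| := by
    rw [Real.sqrt_mul (by norm_num) _, Real.sqrt_sq_eq_abs]
  rw [hsqrt8]
  have hs28 : Real.sqrt 2 * Real.sqrt 8 = 4 := by
    rw [← Real.sqrt_mul (by norm_num : (0:ℝ) ≤ 2) 8]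
    rw [show (2:ℝ) * 8 = 16 by norm_num, show (16:ℝ) = 4^2 by norm_num,
      Real.sqrt_sq (by norm_num : (0:ℝ) ≤ 4)]
  have htrig := trig_final hθ.1 hθ.2
  have hchain : ε * N * |Real.sin (θ/2)| ≤ ρ - al := by
    have s1 : ε * N * |Real.sin (θ/2)| ≤ 4 * |be| * |Real.sin (θ/2)| :=
      mul_le_mul_of_nonneg_right hεN (abs_nonneg _)
    have s2 : 4 * |be| * |Real.sin (θ/2)| = ρ * (4 * |Real.sin (4*θ)| * |Real.sin (θ/2)|) := by
      rw [hbe_eq, abs_mul, abs_of_nonneg hρ0]; ring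
    have s3 : ρ * (4 * |Real.sin (4*θ)| * |Real.sin (θ/2)|) ≤ ρ * (1 - Real.cos (4*θ)) :=
      mul_le_mul_of_nonneg_left htrig hρ0
    have s4 : ρ * (1 - Real.cos (4*θ)) = ρ - al := by rw [hal_eq]; ring
    linarith
  calc Real.sqrt 2 * ε / 4 * N * (Real.sqrt 8 * |Real.sin (θ/2)|)
      = (Real.sqrt 2 * Real.sqrt 8 / 4) * (ε * N * |Real.sin (θ/2)|) := by ring
    _ = ε * N * |Real.sin (θ/2)| := by rw [hs28]; norm_num
    _ ≤ ρ - al := hchain
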